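/- arXiv:1402.5942 — 3 statements merged into one kernel-verified Lean document; each statement's English description precedes it below -/
import Mathlib

section
/- The map φ: ℝ⁴ → ℝ³, φ(q₁,q₂,p₁,p₂) = (q₁, p₁, p₂ − (1/2)q₁²), is a surjective submersion mapping solutions of the Hamiltonian system q̇₁ = p₁, q̇₂ = kp₂ − (k/2)q₁², ṗ₁ = kp₂q₁ − (k/2)q₁³, ṗ₂ = 0 onto solutions of ẋ = y, ẏ = kxz, ż = −xy; that is, the differential of φ maps the ℝ⁴ vector field to the ℝ³ vector field at every point. -/
lemma phi_hasFDeriv (u : ℝ × ℝ × ℝ × ℝ) :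
    ∀ v : ℝ × ℝ × ℝ × ℝ,
      fderiv ℝ (fun u : ℝ × ℝ × ℝ × ℝ => (u.1, u.2.2.1, u.2.2.2 - (1/2) * u.1 ^ 2)) u v
        = (v.1, v.2.2.1, v.2.2.2 - u.1 * v.1) := by
  have hq : HasFDerivAt (fun u : ℝ × ℝ × ℝ × ℝ => u.1)
      (ContinuousLinearMap.fst ℝ ℝ (ℝ × ℝ × ℝ)) u := hasFDerivAt_fst
  have hp1 : HasFDerivAt (fun u : ℝ × ℝ × ℝ × ℝ => u.2.2.1)
      ((ContinuousLinearMap.fst ℝ ℝ ℝ).comp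
        ((ContinuousLinearMap.snd ℝ ℝ (ℝ × ℝ)).comp
          (ContinuousLinearMap.snd ℝ ℝ (ℝ × ℝ × ℝ)))) u :=
    hasFDerivAt_fst.comp u (hasFDerivAt_snd.comp u hasFDerivAt_snd)
  have hp2 : HasFDerivAt (fun u : ℝ × ℝ × ℝ × ℝ => u.2.2.2)
      ((ContinuousLinearMap.snd ℝ ℝ ℝ).comp
        ((ContinuousLinearMap.snd ℝ ℝ (ℝ × ℝ)).comp
          (ContinuousLinearMap.snd ℝ ℝ (ℝ × ℝ × ℝ)))) u :=
    hasFDerivAt_snd.comp u (hasFDerivAt_snd.comp u hasFDerivAt_snd)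
  have hsq : HasFDerivAt (fun u : ℝ × ℝ × ℝ × ℝ => u.1 ^ 2)
      (u.1 • ContinuousLinearMap.fst ℝ ℝ (ℝ × ℝ × ℝ)
        + u.1 • ContinuousLinearMap.fst ℝ ℝ (ℝ × ℝ × ℝ)) u := by
    simpa [pow_two, Pi.mul_def] using hq.mul hq
  have h3 := hp2.sub (hsq.const_mul (1/2))
  have hφ := hq.prodMk (hp1.prodMk h3)
  intro v
  rw [HasFDerivAt.fderiv (f := fun u : ℝ × ℝ × ℝ × ℝ => (u.1, u.2.2.1, u.2.2.2 - (1/2) * u.1 ^ 2)) hφ]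
  simp
  ring

/-- φ(q₁,q₂,p₁,p₂) = (q₁, p₁, p₂ − (1/2)q₁²) is a surjective submersion
intertwining X₄(q₁,q₂,p₁,p₂) = (p₁, kp₂ − (k/2)q₁², kp₂q₁ − (k/2)q₁³, 0)
with X₃(x,y,z) = (y, kxz, −xy). -/
theorem phi_symplectic_realization (k : ℝ) :
    let φ : ℝ × ℝ × ℝ × ℝ → ℝ × ℝ × ℝ :=
      fun u => (u.1, u.2.2.1, u.2.2.2 - (1/2) * u.1 ^ 2)
    let X4 : ℝ × ℝ × ℝ × ℝ → ℝ × ℝ × ℝ × ℝ :=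
      fun u => (u.2.2.1, k * u.2.2.2 - (k/2) * u.1 ^ 2,
        k * u.2.2.2 * u.1 - (k/2) * u.1 ^ 3, 0)
    let X3 : ℝ × ℝ × ℝ → ℝ × ℝ × ℝ :=
      fun p => (p.2.1, k * p.1 * p.2.2, -(p.1 * p.2.1))
    Function.Surjective φ ∧
    (∀ u : ℝ × ℝ × ℝ × ℝ, Function.Surjective (fderiv ℝ φ u)) ∧
    (∀ u : ℝ × ℝ × ℝ × ℝ, fderiv ℝ φ u (X4 u) = X3 (φ u)) := by
  intro φ X4 X3
  refine ⟨?_, ?_, ?_⟩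
  · rintro ⟨x, y, z⟩
    exact ⟨(x, 0, y, z + (1/2) * x ^ 2), by simp [φ]⟩
  · intro u
    rintro ⟨a, b, c⟩
    refine ⟨(a, 0, b, c + u.1 * a), ?_⟩
    rw [phi_hasFDeriv u]
    simp
  · intro u
    rw [phi_hasFDeriv u]
    simp only [φ, X4, X3]
    refine Prod.ext ?_ (Prod.ext ?_ ?_) <;> simp <;> ring
end

section
/- Let k < 0 and M > 0. The curve t ↦ (x(t), y(t), z(t)) with x(t) = 2√M sec(√(−kM) t), y(t) = 2M√(−k) sec(√(−kM) t) tan(√(−kM) t), z(t) = −M(1 + 2 tan²(√(−kM) t)), defined for t ∈ (−π/(2√(−kM)), π/(2√(−kM))), is a solution of the system ẋ = y, ẏ = kxz, ż = −xy. -/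
open Real

/-- For k < 0, M > 0, the curve
x(t) = 2√M sec(√(−kM)t), y(t) = 2M√(−k) sec(√(−kM)t)tan(√(−kM)t),
z(t) = −M(1 + 2tan²(√(−kM)t)) solves ẋ = y, ẏ = kxz, ż = −xy on
(−π/(2√(−kM)), π/(2√(−kM))). -/
theorem sec_tan_solution (k M : ℝ) (hk : k < 0) (hM : 0 < M) :
    let s := Real.sqrt (-(k * M))
    let x : ℝ → ℝ := fun t => 2 * Real.sqrt M * (1 / Real.cos (s * t))
    let y : ℝ → ℝ := fun t =>
      2 * M * Real.sqrt (-k) * (1 / Real.cos (s * t)) * Real.tan (s * t)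
    let z : ℝ → ℝ := fun t => -M * (1 + 2 * Real.tan (s * t) ^ 2)
    ∀ t ∈ Set.Ioo (-(π / (2 * s))) (π / (2 * s)),
      HasDerivAt x (y t) t ∧
      HasDerivAt y (k * x t * z t) t ∧
      HasDerivAt z (-(x t * y t)) t := by
  intro s x y z t ht
  have hkM : 0 < -(k * M) := by nlinarith
  have hs : 0 < s := Real.sqrt_pos.2 hkM
  have hs2 : s ^ 2 = -(k * M) := Real.sq_sqrt hkM.le
  have hss : Real.sqrt M * Real.sqrt (-k) = s := by
    rw [← Real.sqrt_mul hM.le]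
    congr 1; ring
  have hMsq : Real.sqrt M * Real.sqrt M = M := Real.mul_self_sqrt hM.le
  have hMk : M * Real.sqrt (-k) = Real.sqrt M * s := by
    rw [← hss]; linear_combination (-Real.sqrt (-k)) * hMsq
  obtain ⟨ht1, ht2⟩ := ht
  have e : s * (π / (2 * s)) = π / 2 := by field_simp
  have hb1 : s * t < π / 2 := by
    have := mul_lt_mul_of_pos_left ht2 hs; linarith [this, e.le]
  have hb2 : -(π / 2) < s * t := by
    have := mul_lt_mul_of_pos_left ht1 hs
    have e2 : s * -(π / (2 * s)) = -(π / 2) := by field_simp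
    linarith [this, e2.ge]
  have hcpos : 0 < Real.cos (s * t) :=
    Real.cos_pos_of_mem_Ioo ⟨hb2, hb1⟩
  have hc : Real.cos (s * t) ≠ 0 := hcpos.ne'
  have hpy : Real.sin (s * t) ^ 2 = 1 - Real.cos (s * t) ^ 2 := by
    have := Real.sin_sq_add_cos_sq (s * t); linarith
  have hlin : HasDerivAt (fun u : ℝ => s * u) s t := by
    simpa using (hasDerivAt_id t).const_mul s
  have hcos : HasDerivAt (fun u : ℝ => Real.cos (s * u)) (-Real.sin (s * t) * s) t :=
    (Real.hasDerivAt_cos (s * t)).comp t hlin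
  have hsec : HasDerivAt (fun u : ℝ => 1 / Real.cos (s * u))
      (Real.sin (s * t) * s / Real.cos (s * t) ^ 2) t := by
    have h := hcos.inv hc
    simp only [one_div]
    refine h.congr_deriv (Eq.symm ?_)
    field_simp
  have htan : HasDerivAt (fun u : ℝ => Real.tan (s * u)) (s / Real.cos (s * t) ^ 2) t := by
    have h := (Real.hasDerivAt_tan hc).comp t hlin
    refine h.congr_deriv (Eq.symm ?_)
    try field_simp
    try ring
  set c := Real.cos (s * t) with hcdef
  set sn := Real.sin (s * t) with hsndef
  refine ⟨?_, ?_, ?_⟩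
  · have h := hsec.const_mul (2 * Real.sqrt M)
    refine h.congr_deriv (Eq.symm ?_)
    show 2 * M * Real.sqrt (-k) * (1 / c) * Real.tan (s * t) = _
    rw [Real.tan_eq_sin_div_cos, ← hcdef, ← hsndef]
    linear_combination (2 * sn / c ^ 2) * hMk
  · have h := (hsec.const_mul (2 * M * Real.sqrt (-k))).mul htan
    refine h.congr_deriv (Eq.symm ?_)
    show k * (2 * Real.sqrt M * (1 / c)) * (-M * (1 + 2 * Real.tan (s * t) ^ 2)) = _
    rw [Real.tan_eq_sin_div_cos, ← hcdef, ← hsndef]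
    have hcc : c * (1 / c) = 1 := by field_simp
    linear_combination (-(2 * s * sn ^ 2 / c ^ 3 + 2 * s / c ^ 3)) * hMk +
      (-(2 * Real.sqrt M / c + 4 * Real.sqrt M * sn ^ 2 / c ^ 3)) * hs2 +
      (2 * Real.sqrt M * s ^ 2 / c ^ 3) * hpy +
      (-(2 * Real.sqrt M * s ^ 2 * (1 / c) * (c * (1 / c) + 1))) * hcc
  · have h := (((htan.pow 2).const_mul 2).const_add 1).const_mul (-M)
    refine h.congr_deriv (Eq.symm ?_)
    show -(2 * Real.sqrt M * (1 / c) *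
      (2 * M * Real.sqrt (-k) * (1 / c) * Real.tan (s * t))) = _
    rw [Real.tan_eq_sin_div_cos, ← hcdef, ← hsndef]
    norm_num
    linear_combination (4 * Real.sqrt M * sn / c ^ 3) * hMk +
      (4 * s * sn / c ^ 3) * hMsq
end

section
/- Let k < 0 and M ≠ 0 with p(t) = e^{M√(−k)(t+α)}. The heteroclinic curve x(t) = M(p(t)−1)/(p(t)+1), y(t) = 2M²√(−k) p(t)/(p(t)+1)², z(t) = 2M² p(t)/(p(t)+1)² satisfies H_k(x(t),y(t),z(t)) = H_k(M,0,0) = 0 and C(x(t),y(t),z(t)) = C(M,0,0) = M²/2 for all t ∈ ℝ. -/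
/-- Along the heteroclinic curve, H_k ≡ H_k(M,0,0) = 0 and C ≡ C(M,0,0) = M²/2. -/
theorem heteroclinic_levels (k M α : ℝ) (hk : k < 0) (hM : M ≠ 0) :
    let p : ℝ → ℝ := fun t => Real.exp (M * Real.sqrt (-k) * (t + α))
    let x : ℝ → ℝ := fun t => M * (p t - 1) / (p t + 1)
    let y : ℝ → ℝ := fun t => 2 * M ^ 2 * Real.sqrt (-k) * p t / (p t + 1) ^ 2
    let z : ℝ → ℝ := fun t => 2 * M ^ 2 * p t / (p t + 1) ^ 2
    ∀ t : ℝ,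
      (1/2) * (y t ^ 2 + k * z t ^ 2) = 0 ∧
      (1/2) * x t ^ 2 + z t = M ^ 2 / 2 := by
  intro p x y z t
  have hp : p t > 0 := Real.exp_pos _
  have hne : p t + 1 ≠ 0 := by positivity
  have hs : Real.sqrt (-k) ^ 2 = -k := Real.sq_sqrt (by linarith)
  constructor
  · show (1/2) * ((2 * M ^ 2 * Real.sqrt (-k) * p t / (p t + 1) ^ 2) ^ 2
      + k * (2 * M ^ 2 * p t / (p t + 1) ^ 2) ^ 2) = 0
    field_simp
    linear_combination (2 * M^4 * (p t)^2) * hs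
  · show (1/2) * (M * (p t - 1) / (p t + 1)) ^ 2
      + 2 * M ^ 2 * p t / (p t + 1) ^ 2 = M ^ 2 / 2
    field_simp
    ring
end
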